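/- arXiv:0802.3933 — 4 statements merged into one kernel-verified Lean document; each statement's English description precedes it below -/
import Mathlib

section
/- Let A be a bounded linear operator on a Hilbert space H with A y = f, ‖f_δ - f‖ ≤ δ, and u₀ - y ⟂ ker(A). Let u_δ(t) solve u_δ' = -A*(A u_δ - f_δ), u_δ(0) = u₀. If t_δ → ∞ and t_δ δ → 0 as δ → 0, then lim_{δ→0} ‖u_δ(t_δ) - y‖ = 0. -/
open NormedSpace Filter
open scoped InnerProductSpace
set_option maxHeartbeats 1000000
set_option synthInstance.maxHeartbeats 200000

section Aux

variable {H : Type*} [NormedAddCommGroup H] [InnerProductSpace ℂ H] [CompleteSpace H]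

/-- semiconjugation passes to exponentials -/
theorem stmt7_semiconj_exp {R : Type*} [NormedRing R] [NormedAlgebra ℝ R] [CompleteSpace R]
    {a x y : R} (h : SemiconjBy a x y) : a * exp x = exp y * a := by
  rw [exp_eq_tsum ℝ]
  have hs := expSeries_summable' (𝕂 := ℝ) x
  have hs' := expSeries_summable' (𝕂 := ℝ) y
  calc a * (∑' (n : ℕ), ((n.factorial : ℝ)⁻¹) • x ^ n)
      = ∑' (n : ℕ), a * (((n.factorial : ℝ)⁻¹) • x ^ n) := (hs.tsum_mul_left a).symm
    _ = ∑' (n : ℕ), (((n.factorial : ℝ)⁻¹) • y ^ n) * a := by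
        congr 1; funext n
        rw [mul_smul_comm, smul_mul_assoc, (h.pow_right n).eq]
    _ = (∑' (n : ℕ), ((n.factorial : ℝ)⁻¹) • y ^ n) * a := hs'.tsum_mul_right a

theorem stmt7_hasDerivAt_expApply (S : H →L[ℂ] H) (x : H) (t : ℝ) :
    HasDerivAt (fun t : ℝ => exp (t • S) x) (S (exp (t • S) x)) t := by
  have h := ((ContinuousLinearMap.apply ℂ H x).restrictScalars ℝ).hasFDerivAt.comp_hasDerivAt t
    (hasDerivAt_exp_smul_const' S t)
  simpa [Function.comp_def] using h

theorem stmt7_sq_deriv (B : H →L[ℂ] H) (x : H) (t : ℝ) :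
    HasDerivAt
      (fun t : ℝ => ‖exp (t • (-(ContinuousLinearMap.adjoint B ∘L B))) x‖ ^ 2)
      (-(2 * ‖B (exp (t • (-(ContinuousLinearMap.adjoint B ∘L B))) x)‖ ^ 2)) t := by
  set T := ContinuousLinearMap.adjoint B ∘L B with hT
  set v : ℝ → H := fun t => exp (t • (-T)) x with hv
  have hder : ∀ s, HasDerivAt v ((-T) (v s)) s := fun s => stmt7_hasDerivAt_expApply (-T) x s
  have h1 : HasDerivAt (fun s => (inner ℂ (v s) (v s) : ℂ))
      (⟪v t, (-T) (v t)⟫_ℂ + ⟪(-T) (v t), v t⟫_ℂ) t :=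
    HasDerivAt.inner ℂ (hder t) (hder t)
  have h2 : HasDerivAt (fun s => RCLike.re (inner ℂ (v s) (v s) : ℂ))
      (RCLike.re (⟪v t, (-T) (v t)⟫_ℂ + ⟪(-T) (v t), v t⟫_ℂ)) t :=
    ((RCLike.reCLM (K := ℂ)).hasFDerivAt.comp_hasDerivAt t h1 : _)
  have hfun : (fun s => RCLike.re (inner ℂ (v s) (v s) : ℂ)) = fun s => ‖v s‖ ^ 2 := by
    funext s; rw [inner_self_eq_norm_sq]
  have hval : RCLike.re (⟪v t, (-T) (v t)⟫_ℂ + ⟪(-T) (v t), v t⟫_ℂ)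
      = -(2 * ‖B (v t)‖ ^ 2) := by
    have e1 : ⟪v t, (-T) (v t)⟫_ℂ = -⟪B (v t), B (v t)⟫_ℂ := by
      rw [ContinuousLinearMap.neg_apply, inner_neg_right, hT, ContinuousLinearMap.comp_apply,
        ContinuousLinearMap.adjoint_inner_right]
    have e2 : ⟪(-T) (v t), v t⟫_ℂ = -⟪B (v t), B (v t)⟫_ℂ := by
      rw [ContinuousLinearMap.neg_apply, inner_neg_left, hT, ContinuousLinearMap.comp_apply,
        ContinuousLinearMap.adjoint_inner_left]
    rw [e1, e2]
    simp only [map_add, map_neg]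
    rw [inner_self_eq_norm_sq]
    ring
  rw [hfun] at h2
  rw [hval] at h2
  exact h2

theorem stmt7_antitone (B : H →L[ℂ] H) (x : H) :
    Antitone (fun t : ℝ => ‖exp (t • (-(ContinuousLinearMap.adjoint B ∘L B))) x‖) := by
  set T := ContinuousLinearMap.adjoint B ∘L B with hT
  have hmono : Antitone (fun t : ℝ => ‖exp (t • (-T)) x‖ ^ 2) := by
    apply antitone_of_deriv_nonpos
    · exact fun s => (stmt7_sq_deriv B x s).differentiableAt
    · intro s
      rw [(stmt7_sq_deriv B x s).deriv]
      have : (0:ℝ) ≤ 2 * ‖B (exp (s • (-T)) x)‖ ^ 2 := by positivity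
      linarith
  intro s t hst
  have h := hmono hst
  dsimp only at h ⊢
  nlinarith [norm_nonneg (exp (t • (-T)) x), norm_nonneg (exp (s • (-T)) x)]

theorem stmt7_contraction (B : H →L[ℂ] H) (x : H) {t : ℝ} (ht : 0 ≤ t) :
    ‖exp (t • (-(ContinuousLinearMap.adjoint B ∘L B))) x‖ ≤ ‖x‖ := by
  have h := stmt7_antitone B x ht
  dsimp only at h
  rwa [zero_smul, exp_zero, ContinuousLinearMap.one_apply] at h

end Aux
section Decay

variable {H : Type*} [NormedAddCommGroup H] [InnerProductSpace ℂ H] [CompleteSpace H]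

theorem stmt7_decay_range (A : H →L[ℂ] H) (h : H) :
    Filter.Tendsto
      (fun t : ℝ => ‖exp (t • (-(ContinuousLinearMap.adjoint A ∘L A)))
        (ContinuousLinearMap.adjoint A h)‖) atTop (nhds 0) := by
  set T := ContinuousLinearMap.adjoint A ∘L A with hT
  set T' := A ∘L ContinuousLinearMap.adjoint A with hT'
  set g : ℝ → ℝ := fun t => ‖exp (t • (-T)) (ContinuousLinearMap.adjoint A h)‖ with hg
  have hganti : Antitone g := stmt7_antitone A (ContinuousLinearMap.adjoint A h)
  have hgnn : ∀ t, 0 ≤ g t := fun t => norm_nonneg _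
  -- T' = adjoint (adjoint A) ∘L adjoint A
  have hT'eq : T' = ContinuousLinearMap.adjoint (ContinuousLinearMap.adjoint A)
      ∘L ContinuousLinearMap.adjoint A := by
    rw [ContinuousLinearMap.adjoint_adjoint]
  -- intertwining : adjoint A (exp (t • -T') z) = exp (t • -T) (adjoint A z)
  have hsemi : ∀ t : ℝ, ContinuousLinearMap.adjoint A * exp (t • (-T'))
      = exp (t • (-T)) * ContinuousLinearMap.adjoint A := by
    intro t
    apply stmt7_semiconj_exp
    show ContinuousLinearMap.adjoint A * (t • (-T')) = (t • (-T)) * ContinuousLinearMap.adjoint A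
    rw [mul_smul_comm, smul_mul_assoc]
    congr 1
    ext z
    simp [hT, hT', ContinuousLinearMap.mul_apply]
  have hkey : ∀ t : ℝ, ContinuousLinearMap.adjoint A (exp (t • (-T')) h) = exp (t • (-T))
      (ContinuousLinearMap.adjoint A h) := by
    intro t
    have := congrArg (fun (M : H →L[ℂ] H) => M h) (hsemi t)
    simpa [ContinuousLinearMap.mul_apply] using this
  -- ψ and its derivative
  set ψ : ℝ → ℝ := fun t => ‖exp (t • (-T')) h‖ ^ 2 with hψ
  have hψnn : ∀ t, 0 ≤ ψ t := fun t => sq_nonneg _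
  have hψderiv : ∀ t, HasDerivAt ψ (-(2 * (g t) ^ 2)) t := by
    intro t
    have h1 := stmt7_sq_deriv (ContinuousLinearMap.adjoint A) h t
    rw [← hT'eq] at h1
    have h2 : ‖ContinuousLinearMap.adjoint A (exp (t • (-T')) h)‖ = g t := by
      rw [hkey t]
    rw [h2] at h1
    exact h1
  -- first: ∀ ε > 0, ∃ t₀ ≥ 0, g t₀ < ε
  have hsmall : ∀ ε : ℝ, 0 < ε → ∃ t₀ : ℝ, g t₀ < ε := by
    intro ε hε
    by_contra hcon
    push_neg at hcon
    -- g t ≥ ε everywhere, so ψ decreases at rate 2ε²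
    have hχ : Antitone (fun t => ψ t + 2 * ε ^ 2 * t) := by
      apply antitone_of_deriv_nonpos
      · exact fun t => ((hψderiv t).add ((hasDerivAt_id t).const_mul
          (2 * ε ^ 2))).differentiableAt
      · intro t
        have hd : HasDerivAt (fun t => ψ t + 2 * ε ^ 2 * t)
            (-(2 * (g t) ^ 2) + 2 * ε ^ 2 * 1) t :=
          (hψderiv t).add ((hasDerivAt_id t).const_mul (2 * ε ^ 2))
        rw [hd.deriv]
        have := hcon t
        nlinarith [hgnn t]
    have hbig : ∀ t : ℝ, 0 ≤ t → ψ t ≤ ψ 0 - 2 * ε ^ 2 * t := by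
      intro t ht
      have := hχ ht
      simp only at this
      linarith
    have : ψ (ψ 0 / (2 * ε ^ 2) + 1) < 0 := by
      have h2ε : 0 < 2 * ε ^ 2 := by positivity
      have ht : 0 ≤ ψ 0 / (2 * ε ^ 2) + 1 := by positivity
      have := hbig _ ht
      have hdiv : 2 * ε ^ 2 * (ψ 0 / (2 * ε ^ 2)) = ψ 0 := by
        field_simp
      nlinarith
    linarith [hψnn (ψ 0 / (2 * ε ^ 2) + 1)]
  -- conclude tendsto
  rw [Metric.tendsto_atTop]
  intro ε hε
  obtain ⟨t₀, ht₀⟩ := hsmall ε hε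
  refine ⟨t₀, fun t ht => ?_⟩
  rw [Real.dist_eq, sub_zero, abs_of_nonneg (hgnn t)]
  exact lt_of_le_of_lt (hganti ht) ht₀

theorem stmt7_decay (A : H →L[ℂ] H) (x : H) (hx : x ∈ (LinearMap.ker (A : H →ₗ[ℂ] H))ᗮ) :
    Filter.Tendsto
      (fun t : ℝ => ‖exp (t • (-(ContinuousLinearMap.adjoint A ∘L A))) x‖) atTop (nhds 0) := by
  set T := ContinuousLinearMap.adjoint A ∘L A with hT
  -- x is in the closure of range of adjoint A
  have hker : (LinearMap.ker (A : H →ₗ[ℂ] H) : Submodule ℂ H)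
      = (LinearMap.range (ContinuousLinearMap.adjoint A : H →ₗ[ℂ] H))ᗮ := by
    ext z
    simp only [LinearMap.mem_ker, Submodule.mem_orthogonal]
    constructor
    · rintro hz u ⟨w, rfl⟩
      rw [ContinuousLinearMap.coe_coe, ContinuousLinearMap.adjoint_inner_left]
      rw [show A z = 0 from hz, inner_zero_right]
    · intro hz
      have h1 := hz (ContinuousLinearMap.adjoint A (A z)) ⟨A z, rfl⟩
      rw [ContinuousLinearMap.adjoint_inner_left] at h1
      exact inner_self_eq_zero.mp h1
  have hclos : x ∈ (LinearMap.range
      (ContinuousLinearMap.adjoint A : H →ₗ[ℂ] H)).topologicalClosure := by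
    rw [← Submodule.orthogonal_orthogonal_eq_closure, ← hker]
    exact hx
  rw [Metric.tendsto_atTop]
  intro ε hε
  have hx2 : x ∈ closure ((LinearMap.range (ContinuousLinearMap.adjoint A : H →ₗ[ℂ] H)) : Set H) := hclos
  rw [Metric.mem_closure_iff] at hx2
  obtain ⟨z, hzmem, hzdist⟩ := hx2 (ε / 2) (by linarith)
  obtain ⟨w, rfl⟩ := hzmem
  have hdec := stmt7_decay_range A w
  rw [Metric.tendsto_atTop] at hdec
  obtain ⟨N, hN⟩ := hdec (ε / 2) (by linarith)
  refine ⟨max N 0, fun t ht => ?_⟩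
  have htN : N ≤ t := le_trans (le_max_left _ _) ht
  have ht0 : (0:ℝ) ≤ t := le_trans (le_max_right _ _) ht
  have h1 := hN t htN
  rw [Real.dist_eq, sub_zero, abs_of_nonneg (norm_nonneg _)] at h1
  rw [Real.dist_eq, sub_zero, abs_of_nonneg (norm_nonneg _)]
  have hsplit : exp (t • (-T)) x
      = exp (t • (-T)) (x - ContinuousLinearMap.adjoint A w)
        + exp (t • (-T)) (ContinuousLinearMap.adjoint A w) := by
    rw [← map_add]
    congr 1
    abel
  rw [hsplit]
  have h2 : ‖exp (t • (-T)) (x - ContinuousLinearMap.adjoint A w)‖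
      ≤ ‖x - ContinuousLinearMap.adjoint A w‖ := stmt7_contraction A _ ht0
  have h3 : ‖x - ContinuousLinearMap.adjoint A w‖ < ε / 2 := by
    rw [← dist_eq_norm]
    exact hzdist
  calc ‖_ + _‖ ≤ _ + _ := norm_add_le _ _
    _ < ε / 2 + ε / 2 := by exact add_lt_add (lt_of_le_of_lt h2 h3) h1
    _ = ε := by ring

end Decay
section Duhamel

variable {H : Type*} [NormedAddCommGroup H] [InnerProductSpace ℂ H] [CompleteSpace H]

theorem stmt7_clm_apply {F : ℝ → H →L[ℂ] H} {F' : H →L[ℂ] H} {v : ℝ → H} {v' : H} {s : ℝ}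
    (hF : HasDerivAt F F' s) (hv : HasDerivAt v v' s) :
    HasDerivAt (fun r => F r (v r)) (F' (v s) + F s v') s := by
  have hF2 : HasDerivAt (fun r => (F r).restrictScalars ℝ) (F'.restrictScalars ℝ) s :=
    ((ContinuousLinearMap.restrictScalarsL ℂ H H ℝ ℝ).hasFDerivAt.comp_hasDerivAt s hF : _)
  exact hF2.clm_apply hv

theorem stmt7_duhamel (A : H →L[ℂ] H) (f y : H) (hy : A y = f) (fd : H)
    (v : ℝ → H) (hv : ∀ t, HasDerivAt v (-(ContinuousLinearMap.adjoint A (A (v t) - fd))) t)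
    {t : ℝ} (ht : 0 ≤ t) :
    ‖v t - y‖ ≤ ‖exp (t • (-(ContinuousLinearMap.adjoint A ∘L A))) (v 0 - y)‖
      + ‖ContinuousLinearMap.adjoint A (fd - f)‖ * t := by
  set T := ContinuousLinearMap.adjoint A ∘L A with hT
  set g : H := ContinuousLinearMap.adjoint A (fd - f) with hg
  set w : ℝ → H := fun s => v s - y with hwdef
  have hw : ∀ s, HasDerivAt w ((-T) (w s) + g) s := by
    intro s
    have h1 := (hv s).sub_const y
    have heq : (-T) (v s - y) + g = -(ContinuousLinearMap.adjoint A (A (v s) - fd)) := by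
      have h2 : A (v s) - fd = A (v s - y) - (fd - f) := by
        rw [map_sub, hy]
        abel
      rw [h2]
      simp only [map_sub, ContinuousLinearMap.neg_apply, hT, ContinuousLinearMap.comp_apply, hg]
      abel
    rw [← heq] at h1
    exact h1
  set W : ℝ → H := fun s => exp (s • T) (w s) with hWdef
  have hW : ∀ s, HasDerivAt W (exp (s • T) g) s := by
    intro s
    have h1 := stmt7_clm_apply (hasDerivAt_exp_smul_const' T s) (hw s)
    have hcomm : T * exp (s • T) = exp (s • T) * T :=
      (((Commute.refl T).smul_right s).exp_right).eq
    have h2 : (T * exp (s • T)) (w s) + exp (s • T) ((-T) (w s) + g)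
        = exp (s • T) g := by
      rw [hcomm]
      simp only [ContinuousLinearMap.mul_apply, map_add, ContinuousLinearMap.neg_apply, map_neg]
      abel
    rwa [h2] at h1
  -- continuity of the integrand
  have hcont : Continuous fun s : ℝ => exp (s • T) g :=
    (fun s => (stmt7_hasDerivAt_expApply T g s).differentiableAt) |>
      fun hdiff => Differentiable.continuous hdiff
  have hint : IntervalIntegrable (fun s : ℝ => exp (s • T) g) MeasureTheory.volume 0 t :=
    hcont.intervalIntegrable 0 t
  have hftc : ∫ s in (0:ℝ)..t, exp (s • T) g = W t - W 0 :=
    intervalIntegral.integral_eq_sub_of_hasDerivAt (fun s _ => hW s) hint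
  -- invert
  have hWt : W t = w 0 + ∫ s in (0:ℝ)..t, exp (s • T) g := by
    have hW0 : W 0 = w 0 := by
      simp only [hWdef, zero_smul, exp_zero, ContinuousLinearMap.one_apply]
    rw [hftc, hW0]
    abel
  have hwt : w t = exp ((-t) • T) (W t) := by
    have : exp ((-t) • T) * exp (t • T) = 1 := by
      rw [← exp_add_of_commute_of_mem_ball (𝕂 := ℝ) (((Commute.refl T).smul_left (-t)).smul_right t)
        (by rw [expSeries_radius_eq_top]; exact edist_lt_top _ _) (by rw [expSeries_radius_eq_top]; exact edist_lt_top _ _)]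
      rw [← add_smul]
      simp
    have h3 := congrArg (fun (M : H →L[ℂ] H) => M (w t)) this
    simpa only [ContinuousLinearMap.mul_apply, ContinuousLinearMap.one_apply] using h3.symm
  rw [show v t - y = w t from rfl, hwt, hWt, map_add]
  have hmain : exp ((-t) • T) (∫ s in (0:ℝ)..t, exp (s • T) g)
      = ∫ s in (0:ℝ)..t, exp ((s - t) • T) g := by
    rw [← ContinuousLinearMap.intervalIntegral_comp_comm _ hint]
    congr 1
    funext s
    have : exp ((-t) • T) (exp (s • T) g) = (exp ((-t) • T) * exp (s • T)) g := rfl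
    rw [this, ← exp_add_of_commute_of_mem_ball (𝕂 := ℝ) (((Commute.refl T).smul_left (-t)).smul_right s)
      (by rw [expSeries_radius_eq_top]; exact edist_lt_top _ _) (by rw [expSeries_radius_eq_top]; exact edist_lt_top _ _)]
    congr 2
    rw [← add_smul]
    congr 1
    ring
  rw [hmain]
  have hnorm2 : ‖∫ s in (0:ℝ)..t, exp ((s - t) • T) g‖ ≤ ‖g‖ * t := by
    have hb : ∀ s ∈ Set.uIoc (0:ℝ) t, ‖exp ((s - t) • T) g‖ ≤ ‖g‖ := by
      intro s hs
      rw [Set.uIoc_of_le ht] at hs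
      have hst : s ≤ t := hs.2
      have : (s - t) • T = (t - s) • (-T) := by
        rw [smul_neg, ← neg_smul]
        congr 1
        ring
      rw [this]
      exact stmt7_contraction A g (by linarith)
    have := intervalIntegral.norm_integral_le_of_norm_le_const hb
    rwa [sub_zero, abs_of_nonneg ht] at this
  have hfirst : exp ((-t) • T) (w 0) = exp (t • (-T)) (w 0) := by
    congr 1
    rw [smul_neg, ← neg_smul]
  calc ‖exp ((-t) • T) (w 0) + _‖
      ≤ ‖exp ((-t) • T) (w 0)‖ + ‖∫ s in (0:ℝ)..t, exp ((s - t) • T) g‖ := norm_add_le _ _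
    _ ≤ ‖exp (t • (-T)) (w 0)‖ + ‖g‖ * t := by rw [hfirst]; exact add_le_add le_rfl hnorm2
end Duhamel
theorem stmt7 {H : Type*} [NormedAddCommGroup H] [InnerProductSpace ℂ H] [CompleteSpace H]
    (A : H →L[ℂ] H) (f y u₀ : H) (hy : A y = f)
    (hperp : u₀ - y ∈ (LinearMap.ker (A : H →ₗ[ℂ] H))ᗮ)
    (fδ : ℝ → H) (hfδ : ∀ δ > 0, ‖fδ δ - f‖ ≤ δ)
    (u : ℝ → ℝ → H) (hu0 : ∀ δ > 0, u δ 0 = u₀)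
    (hu : ∀ δ > 0, ∀ t : ℝ,
      HasDerivAt (u δ) (-(ContinuousLinearMap.adjoint A (A (u δ t) - fδ δ))) t)
    (tδ : ℝ → ℝ)
    (htδ : Filter.Tendsto tδ (nhdsWithin 0 (Set.Ioi 0)) Filter.atTop)
    (htδδ : Filter.Tendsto (fun δ => tδ δ * δ) (nhdsWithin 0 (Set.Ioi 0)) (nhds 0)) :
    Filter.Tendsto (fun δ => ‖u δ (tδ δ) - y‖) (nhdsWithin 0 (Set.Ioi 0)) (nhds 0) := by
  set T := ContinuousLinearMap.adjoint A ∘L A with hT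
  have hkey : ∀ δ > 0, 0 ≤ tδ δ → ‖u δ (tδ δ) - y‖ ≤
      ‖exp (tδ δ • (-T)) (u₀ - y)‖ + ‖ContinuousLinearMap.adjoint A‖ * (tδ δ * δ) := by
    intro δ hδ htpos
    have h1 := stmt7_duhamel A f y hy (fδ δ) (u δ) (hu δ hδ) htpos
    rw [hu0 δ hδ] at h1
    refine h1.trans (add_le_add le_rfl ?_)
    have h2 : ‖ContinuousLinearMap.adjoint A (fδ δ - f)‖ ≤ ‖ContinuousLinearMap.adjoint A‖ * δ :=
      le_trans (ContinuousLinearMap.le_opNorm _ _)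
        (mul_le_mul_of_nonneg_left (hfδ δ hδ) (norm_nonneg _))
    calc ‖ContinuousLinearMap.adjoint A (fδ δ - f)‖ * tδ δ
        ≤ (‖ContinuousLinearMap.adjoint A‖ * δ) * tδ δ :=
          mul_le_mul_of_nonneg_right h2 htpos
      _ = ‖ContinuousLinearMap.adjoint A‖ * (tδ δ * δ) := by ring
  have hdec := stmt7_decay A (u₀ - y) hperp
  have hcomp : Filter.Tendsto (fun δ => ‖exp (tδ δ • (-T)) (u₀ - y)‖)
      (nhdsWithin 0 (Set.Ioi 0)) (nhds 0) := hdec.comp htδ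
  have hbound : Filter.Tendsto
      (fun δ => ‖exp (tδ δ • (-T)) (u₀ - y)‖ + ‖ContinuousLinearMap.adjoint A‖ * (tδ δ * δ))
      (nhdsWithin 0 (Set.Ioi 0)) (nhds 0) := by
    have h2 : Filter.Tendsto (fun δ => ‖ContinuousLinearMap.adjoint A‖ * (tδ δ * δ))
        (nhdsWithin 0 (Set.Ioi 0)) (nhds (‖ContinuousLinearMap.adjoint A‖ * 0)) :=
      htδδ.const_mul _
    rw [mul_zero] at h2
    simpa using hcomp.add h2
  apply squeeze_zero' (Filter.Eventually.of_forall fun δ => norm_nonneg _) ?_ hbound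
  have hev : ∀ᶠ δ in nhdsWithin (0:ℝ) (Set.Ioi 0), 0 ≤ tδ δ :=
    htδ.eventually (Filter.eventually_ge_atTop 0)
  filter_upwards [hev, self_mem_nhdsWithin] with δ h0 hδ
  exact hkey δ hδ h0
end

section
/- Let A be a bounded linear operator on a Hilbert space H with Ay = f, ‖f_δ - f‖ ≤ δ, and let u_δ(t) solve u_δ' = -A*(A u_δ - f_δ), u_δ(0) = u₀. If ‖A u_δ(t) - f_δ‖ ≥ Cδ for all t in an interval [0, τ] with C > 1, then t ↦ ‖u_δ(t) - y‖ is nonincreasing on [0, τ]. -/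
theorem stmt10 {H : Type*} [NormedAddCommGroup H] [InnerProductSpace ℂ H] [CompleteSpace H]
    (A : H →L[ℂ] H) (f y fδ u₀ : H) (δ C τ : ℝ) (hδ : 0 < δ) (hC : 1 < C) (hτ : 0 ≤ τ)
    (hy : A y = f) (hfδ : ‖fδ - f‖ ≤ δ)
    (u : ℝ → H) (hu0 : u 0 = u₀)
    (hu : ∀ t : ℝ, HasDerivAt u (-(ContinuousLinearMap.adjoint A (A (u t) - fδ))) t)
    (hdisc : ∀ t ∈ Set.Icc (0 : ℝ) τ, C * δ ≤ ‖A (u t) - fδ‖) :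
    AntitoneOn (fun t => ‖u t - y‖) (Set.Icc 0 τ) := by
  set u' : ℝ → H := fun t => -(ContinuousLinearMap.adjoint A (A (u t) - fδ)) with hu'def
  have hderiv : ∀ t : ℝ, HasDerivAt (fun s => ‖u s - y‖ ^ 2)
      (2 * Complex.re (inner ℂ (u' t) (u t - y) : ℂ)) t := by
    intro t
    have h1 : HasDerivAt (fun s => u s - y) (u' t) t := (hu t).sub_const y
    have h2 := (h1.inner ℂ h1)
    have h3 := Complex.reCLM.hasFDerivAt.comp_hasDerivAt t h2
    have h4 : (fun s => Complex.reCLM (inner ℂ (u s - y) (u s - y) : ℂ))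
        = fun s => ‖u s - y‖ ^ 2 := by
      funext s
      exact inner_self_eq_norm_sq (𝕜 := ℂ) (u s - y)
    rw [show (⇑Complex.reCLM ∘ fun t => (inner ℂ (u t - y) (u t - y) : ℂ)) = fun s => Complex.reCLM (inner ℂ (u s - y) (u s - y) : ℂ) from rfl, h4] at h3
    convert h3 using 1
    · rfl
    · rfl
    have : Complex.re (inner ℂ (u t - y) (u' t) : ℂ) = Complex.re (inner ℂ (u' t) (u t - y) : ℂ) := by
      rw [← inner_conj_symm (u' t) (u t - y)]
      exact Complex.conj_re _
    simp only [map_add, Complex.reCLM_apply]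
    rw [this]; ring
  have hsq : AntitoneOn (fun t => ‖u t - y‖ ^ 2) (Set.Icc 0 τ) := by
    apply antitoneOn_of_deriv_nonpos (convex_Icc 0 τ)
    · exact fun t _ => ((hderiv t).continuousAt).continuousWithinAt
    · exact fun t _ => ((hderiv t).differentiableAt).differentiableWithinAt
    · intro t ht
      rw [interior_Icc] at ht
      rw [(hderiv t).deriv]
      set v := A (u t) - fδ with hv
      set w := fδ - f with hw
      have hAuy : A (u t - y) = v + w := by
        rw [map_sub, hy, hv, hw]; abel
      have hre : Complex.re (inner ℂ (u' t) (u t - y) : ℂ)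
          = -(‖v‖ ^ 2 + Complex.re (inner ℂ v w : ℂ)) := by
        rw [hu'def]
        simp only [inner_neg_left, ContinuousLinearMap.adjoint_inner_left, hAuy,
          inner_add_right, map_add, Complex.neg_re]
        rw [← hv]
        congr 1
        rw [Complex.add_re]
        congr 1
        exact inner_self_eq_norm_sq (𝕜 := ℂ) v
      have hvw : -(‖v‖ * ‖w‖) ≤ Complex.re (inner ℂ v w : ℂ) := by
        have h1 : |Complex.re (inner ℂ v w : ℂ)| ≤ ‖(inner ℂ v w : ℂ)‖ := Complex.abs_re_le_norm _
        have h2 : ‖(inner ℂ v w : ℂ)‖ ≤ ‖v‖ * ‖w‖ := norm_inner_le_norm v w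
        have := abs_le.mp (h1.trans h2)
        linarith [this.1]
      have hvbig : C * δ ≤ ‖v‖ := hdisc t ⟨le_of_lt ht.1, le_of_lt ht.2⟩
      have hwle : ‖w‖ ≤ δ := hfδ
      have hvnn : (0:ℝ) ≤ ‖v‖ := norm_nonneg _
      rw [hre]
      have hvδ : δ ≤ ‖v‖ := le_trans (by nlinarith) hvbig
      nlinarith [mul_le_mul_of_nonneg_left hwle hvnn, mul_le_mul_of_nonneg_left hvδ hvnn]
  intro a ha b hb hab
  have := hsq ha hb hab
  simp only at this ⊢
  nlinarith [norm_nonneg (u a - y), norm_nonneg (u b - y)]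
end

section
/- Let A be a bounded linear operator on a Hilbert space H with Ay = f, ‖f_δ - f‖ ≤ δ, δ > 0, u₀ - y ⟂ ker(A), and suppose ‖A u₀ - f_δ‖ > Cδ for a constant C ∈ (1, 2). Then the equation ‖A u_δ(t) - f_δ‖ = Cδ has a unique solution t_δ ∈ (0, ∞), where u_δ(t) solves u_δ' = -A*(A u_δ - f_δ), u_δ(0) = u₀. -/
open ContinuousLinearMap Set Filter Topology

set_option maxHeartbeats 1000000 in

theorem stmt11 {H : Type*} [NormedAddCommGroup H] [InnerProductSpace ℂ H] [CompleteSpace H]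
    (A : H →L[ℂ] H) (f y fδ u₀ : H) (δ C : ℝ) (hδ : 0 < δ) (hC1 : 1 < C) (hC2 : C < 2)
    (hy : A y = f) (hfδ : ‖fδ - f‖ ≤ δ)
    (hperp : u₀ - y ∈ (LinearMap.ker (A : H →ₗ[ℂ] H))ᗮ)
    (h0 : C * δ < ‖A u₀ - fδ‖)
    (u : ℝ → H) (hu0 : u 0 = u₀)
    (hu : ∀ t : ℝ, HasDerivAt u (-(ContinuousLinearMap.adjoint A (A (u t) - fδ))) t) :
    ∃! t : ℝ, 0 < t ∧ ‖A (u t) - fδ‖ = C * δ := by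
  letI : InnerProductSpace ℝ H := InnerProductSpace.rclikeToReal ℂ H
  set c : ℝ := C * δ with hcdef
  have hδc : δ < c := by nlinarith
  have hcpos : 0 < c := lt_trans hδ hδc
  set w : ℝ → H := fun t => A (u t) - fδ with hwdef
  have hw0 : c < ‖w 0‖ := by simpa [hwdef, hu0] using h0
  -- derivative of w
  have hwd : ∀ t, HasDerivAt w (-(A (adjoint A (w t)))) t := by
    intro t
    have h1 := ((A.restrictScalars ℝ).hasFDerivAt (x := u t)).comp_hasDerivAt t (hu t)
    have h2 := h1.sub_const fδ
    have h3 : HasDerivAt (fun s => A (u s) - fδ) (-(A (adjoint A (A (u t) - fδ)))) t := by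
      simpa [Function.comp, map_neg] using h2
    exact h3
  -- key inner product identity
  have hAz : ∀ t, (inner ℝ (w t) (A (adjoint A (w t))) : ℝ) = ‖adjoint A (w t)‖ ^ 2 := by
    intro t
    rw [real_inner_eq_re_inner ℂ, ← ContinuousLinearMap.adjoint_inner_left]
    exact inner_self_eq_norm_sq _
  -- derivative of ψ = ‖w‖²
  have hψd : ∀ t, HasDerivAt (fun s => ‖w s‖ ^ 2) (-(2 * ‖adjoint A (w t)‖ ^ 2)) t := by
    intro t
    have h1 := HasDerivAt.inner ℝ (hwd t) (hwd t)
    simp only [real_inner_self_eq_norm_sq] at h1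
    convert h1 using 1
    · rfl
    · rfl
    rw [inner_neg_right, inner_neg_left]
    have hc := real_inner_comm (w t) (A (adjoint A (w t)))
    rw [hc, hAz t]; ring
  -- ψ is antitone
  have hψanti : Antitone (fun s => ‖w s‖ ^ 2) := by
    apply antitone_of_deriv_nonpos
    · exact fun s => (hψd s).differentiableAt
    · intro s
      rw [(hψd s).deriv]
      nlinarith [sq_nonneg ‖adjoint A (w s)‖]
  -- fact 1: at level ≥ c the adjoint doesn't vanish
  have fact1 : ∀ t, c ≤ ‖w t‖ → adjoint A (w t) ≠ 0 := by
    intro t hct hz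
    have hAuy : A (u t - y) = w t - (f - fδ) := by
      simp only [map_sub, hy, hwdef]; abel
    have h1 : (inner ℂ (w t) (A (u t - y)) : ℂ) = 0 := by
      rw [← ContinuousLinearMap.adjoint_inner_left, hz, inner_zero_left]
    have h2 : (inner ℂ (w t) (w t) : ℂ) = inner ℂ (w t) (f - fδ) := by
      have h2' : (inner ℂ (w t) (w t - (f - fδ)) : ℂ) = 0 := by rw [← hAuy]; exact h1
      rw [inner_sub_right] at h2'
      linear_combination h2'
    have h4 : ‖w t‖ ^ 2 = RCLike.re (inner ℂ (w t) (f - fδ) : ℂ) := by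
      rw [← h2, inner_self_eq_norm_sq]
    have h5 := re_inner_le_norm (𝕜 := ℂ) (w t) (f - fδ)
    have h6 : ‖f - fδ‖ ≤ δ := by rwa [norm_sub_rev]
    nlinarith [norm_nonneg (w t)]
  -- derivative of g = ‖u - y‖²
  have hgd : ∀ t, HasDerivAt (fun s => ‖u s - y‖ ^ 2)
      (2 * (inner ℝ (u t - y) (-(adjoint A (w t))) : ℝ)) t := by
    intro t
    have h1 := HasDerivAt.inner ℝ ((hu t).sub_const y) ((hu t).sub_const y)
    simp only [real_inner_self_eq_norm_sq] at h1
    convert h1 using 1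
    · rfl
    · rfl
    have hc := real_inner_comm (u t - y) (-(adjoint A (w t)))
    linarith
  -- derivative bound for g when ‖w‖ ≥ c
  have hgbound : ∀ t, c ≤ ‖w t‖ →
      2 * (inner ℝ (u t - y) (-(adjoint A (w t))) : ℝ) ≤ -(2 * (c * (c - δ))) := by
    intro t hct
    have h1 : (inner ℝ (u t - y) (adjoint A (w t)) : ℝ)
        = RCLike.re (inner ℂ (A (u t - y)) (w t) : ℂ) := by
      rw [real_inner_eq_re_inner ℂ, ContinuousLinearMap.adjoint_inner_right]
    have hAuy : A (u t - y) = w t + (fδ - f) := by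
      simp only [map_sub, hy, hwdef]; abel
    have h2 : RCLike.re (inner ℂ (A (u t - y)) (w t) : ℂ)
        = ‖w t‖ ^ 2 + RCLike.re (inner ℂ (fδ - f) (w t) : ℂ) := by
      rw [hAuy, inner_add_left, map_add, inner_self_eq_norm_sq]
    have h3 := re_inner_le_norm (𝕜 := ℂ) (f - fδ) (w t)
    have h3' : (inner ℂ (f - fδ) (w t) : ℂ) = -(inner ℂ (fδ - f) (w t) : ℂ) := by
      rw [← inner_neg_left, neg_sub]
    rw [h3', map_neg, norm_sub_rev] at h3
    have h7 : (inner ℝ (u t - y) (-(adjoint A (w t))) : ℝ)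
        = -(inner ℝ (u t - y) (adjoint A (w t)) : ℝ) := inner_neg_right _ _
    have hwnn : (0:ℝ) ≤ ‖w t‖ := norm_nonneg _
    rw [h7, h1, h2]
    nlinarith
  -- existence of a point strictly below level c
  have ht0 : ∃ t₀ : ℝ, 0 < t₀ ∧ ‖w t₀‖ < c := by
    by_contra hcon
    push_neg at hcon
    have hall : ∀ t : ℝ, 0 ≤ t → c ≤ ‖w t‖ := by
      intro t ht
      rcases eq_or_lt_of_le ht with h | h
      · rw [← h]; exact hw0.le
      · exact hcon t h
    set K : ℝ := 2 * (c * (c - δ)) with hKdef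
    have hK : 0 < K := by nlinarith
    set T : ℝ := ‖u 0 - y‖ ^ 2 / K + 1 with hTdef
    have hT : 0 < T := by positivity
    have hφd : ∀ t, HasDerivAt (fun s => ‖u s - y‖ ^ 2 + K * s)
        (2 * (inner ℝ (u t - y) (-(adjoint A (w t))) : ℝ) + K) t := by
      intro t
      have := (hgd t).add ((hasDerivAt_id t).const_mul K)
      simp at this ⊢
      exact this
    have hanti : AntitoneOn (fun s => ‖u s - y‖ ^ 2 + K * s) (Icc 0 T) := by
      apply antitoneOn_of_deriv_nonpos (convex_Icc 0 T)
      · exact fun t _ => ((hφd t).continuousAt).continuousWithinAt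
      · intro t _
        exact (hφd t).differentiableAt.differentiableWithinAt
      · intro t htmem
        rw [interior_Icc] at htmem
        rw [(hφd t).deriv]
        have := hgbound t (hall t htmem.1.le)
        linarith
    have hle := hanti (left_mem_Icc.mpr hT.le) (right_mem_Icc.mpr hT.le) hT.le
    simp only [mul_zero, add_zero] at hle
    have hKT : K * T = ‖u 0 - y‖ ^ 2 + K := by
      rw [hTdef]; field_simp
    nlinarith [sq_nonneg ‖u T - y‖]
  obtain ⟨t₀, ht₀pos, ht₀⟩ := ht0
  -- IVT gives a root
  have hwc : ContinuousOn (fun s => ‖w s‖) (Icc 0 t₀) :=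
    fun s _ => ((hwd s).continuousAt.norm).continuousWithinAt
  have hmem : c ∈ Icc ‖w t₀‖ ‖w 0‖ := ⟨ht₀.le, hw0.le⟩
  obtain ⟨t, htmem, htc⟩ := intermediate_value_Icc' ht₀pos.le hwc hmem
  have htc' : ‖w t‖ = c := htc
  have htpos : 0 < t := by
    rcases eq_or_lt_of_le htmem.1 with h | h
    · exfalso; rw [← h] at htc'; rw [htc'] at hw0; exact lt_irrefl c hw0
    · exact h
  -- uniqueness helper
  have huniq : ∀ t₁ t₂ : ℝ, ‖w t₁‖ = c → ‖w t₂‖ = c → t₁ < t₂ → False := by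
    intro t₁ t₂ h1c h2c hlt
    have hz : adjoint A (w t₁) ≠ 0 := fact1 t₁ (le_of_eq h1c.symm)
    have hzn : 0 < ‖adjoint A (w t₁)‖ := norm_pos_iff.mpr hz
    have hneg : -(2 * ‖adjoint A (w t₁)‖ ^ 2) < 0 := by nlinarith
    have hs : Tendsto (slope (fun s => ‖w s‖ ^ 2) t₁) (𝓝[≠] t₁)
        (𝓝 (-(2 * ‖adjoint A (w t₁)‖ ^ 2))) :=
      hasDerivAt_iff_tendsto_slope.mp (hψd t₁)
    have hev : ∀ᶠ x in 𝓝[≠] t₁, slope (fun s => ‖w s‖ ^ 2) t₁ x < 0 :=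
      hs.eventually_lt_const hneg
    have hmono : 𝓝[>] t₁ ≤ 𝓝[≠] t₁ :=
      nhdsWithin_mono _ (fun x hx => Set.mem_compl_singleton_iff.mpr (LT.lt.ne' hx))
    have hioo : Ioo t₁ t₂ ∈ 𝓝[>] t₁ := Ioo_mem_nhdsGT_of_mem ⟨le_refl t₁, hlt⟩
    obtain ⟨x, hx1, hx2⟩ :=
      ((hev.filter_mono hmono).and (eventually_of_mem hioo (fun x hx => hx))).exists
    rw [slope_def_field] at hx1
    have hd : 0 < x - t₁ := by linarith [hx2.1]
    have hlt' : ‖w x‖ ^ 2 < ‖w t₁‖ ^ 2 := by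
      rcases div_neg_iff.mp hx1 with ⟨h1, h2⟩ | ⟨h1, h2⟩
      · linarith
      · linarith
    have h4 : ‖w t₂‖ ^ 2 ≤ ‖w x‖ ^ 2 := hψanti hx2.2.le
    rw [h1c] at hlt'
    rw [h2c] at h4
    linarith
  refine ⟨t, ⟨htpos, htc'⟩, ?_⟩
  rintro t' ⟨ht'p, ht'c⟩
  by_contra hne
  rcases lt_or_gt_of_ne hne with h | h
  · exact huniq t' t ht'c htc' h
  · exact huniq t t' htc' ht'c h
end

section
/- Let B be a bounded nonnegative selfadjoint operator on a Hilbert space H and h ∈ H with Bh ≠ 0. Then ψ(t) = ‖e^{-tB} h‖ satisfies ψ(t) ψ''(t) ≥ ‖B e^{-tB} h‖² > 0 for all t ≥ 0; in particular ψ is strictly convex on [0, ∞). -/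
open NormedSpace

local notation "⟪" x ", " y "⟫" => @inner ℂ _ _ x y

section aux
variable {H : Type*} [NormedAddCommGroup H] [InnerProductSpace ℂ H] [CompleteSpace H]

lemma aux_hasDerivAt (B : H →L[ℂ] H) (h : H) (t : ℝ) :
    HasDerivAt (fun s : ℝ => exp ((-(s : ℂ)) • B) h)
      (-(B (exp ((-(t : ℂ)) • B) h))) t := by
  have h1 : HasDerivAt (fun z : ℂ => exp (z • (-B)))
      ((-B) * exp ((t : ℂ) • (-B))) (t : ℂ) := hasDerivAt_exp_smul_const' (-B) (t : ℂ)
  have h2 : HasDerivAt (fun z : ℂ => exp (z • (-B)) h)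
      (((-B) * exp ((t : ℂ) • (-B))) h) (t : ℂ) :=
    (ContinuousLinearMap.apply ℂ H h).hasFDerivAt.comp_hasDerivAt _ h1
  have h3 := h2.scomp t Complex.ofRealCLM.hasDerivAt
  have e1 : ∀ s : ℝ, (s : ℂ) • (-B) = (-(s : ℂ)) • B := by intro s; rw [smul_neg, neg_smul]
  simp only [Function.comp_def, Complex.ofRealCLM_apply, e1, Complex.ofReal_one, one_smul,
    ContinuousLinearMap.mul_apply, ContinuousLinearMap.neg_apply] at h3
  exact h3

lemma aux_exp_inj (B : H →L[ℂ] H) (t : ℝ) {x : H}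
    (hx : exp ((-(t : ℂ)) • B) x = 0) : x = 0 := by
  have hc : exp (-((-(t : ℂ)) • B)) * exp ((-(t : ℂ)) • B) = 1 := by
    rw [← exp_add_of_commute_of_mem_ball (𝕂 := ℂ) ((Commute.refl _).neg_left)
      ((expSeries_radius_eq_top ℂ (H →L[ℂ] H)).symm ▸ edist_lt_top _ _)
      ((expSeries_radius_eq_top ℂ (H →L[ℂ] H)).symm ▸ edist_lt_top _ _), neg_add_cancel, exp_zero]
  have h0 : exp (-((-(t : ℂ)) • B)) (exp ((-(t : ℂ)) • B) x) = x := by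
    rw [← ContinuousLinearMap.mul_apply, hc]; simp
  rw [hx, map_zero] at h0; exact h0.symm

lemma aux_comm (B : H →L[ℂ] H) (t : ℝ) (x : H) :
    B (exp ((-(t : ℂ)) • B) x) = exp ((-(t : ℂ)) • B) (B x) := by
  have hc : Commute (exp ((-(t : ℂ)) • B)) B :=
    (((Commute.refl B).smul_left _).exp_left)
  have := congrArg (fun L : H →L[ℂ] H => L x) hc.eq
  simpa [ContinuousLinearMap.mul_apply] using this.symm

end aux

theorem stmt15 {H : Type*} [NormedAddCommGroup H] [InnerProductSpace ℂ H] [CompleteSpace H]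
    (B : H →L[ℂ] H) (hB : B.IsPositive) (h : H) (hBh : B h ≠ 0)
    (ψ : ℝ → ℝ) (hψ : ∀ t : ℝ, ψ t = ‖NormedSpace.exp ((-(t : ℂ)) • B) h‖) :
    (∀ t : ℝ, 0 ≤ t →
      ‖B (NormedSpace.exp ((-(t : ℂ)) • B) h)‖ ^ 2 ≤ ψ t * deriv (deriv ψ) t ∧
      0 < ‖B (NormedSpace.exp ((-(t : ℂ)) • B) h)‖ ^ 2) ∧
    StrictConvexOn ℝ (Set.Ici 0) ψ := by
  set u : ℝ → H := fun s => exp ((-(s : ℂ)) • B) h with hu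
  have hsymm : ∀ x y : H, ⟪B x, y⟫ = ⟪x, B y⟫ := fun x y =>
    (ContinuousLinearMap.isSelfAdjoint_iff_isSymmetric.mp hB.isSelfAdjoint) x y
  have hh0 : h ≠ 0 := fun e => hBh (by rw [e, map_zero])
  have hune : ∀ t, u t ≠ 0 := fun t e => hh0 (aux_exp_inj B t e)
  have hBune : ∀ t, B (u t) ≠ 0 := by
    intro t e
    rw [show u t = exp ((-(t : ℂ)) • B) h from rfl, aux_comm] at e
    exact hBh (aux_exp_inj B t e)
  have hψu : ∀ t, ψ t = ‖u t‖ := hψ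
  have hψpos : ∀ t, 0 < ψ t := fun t => by rw [hψu t]; exact norm_pos_iff.mpr (hune t)
  have hu' : ∀ t, HasDerivAt u (-(B (u t))) t := fun t => aux_hasDerivAt B h t
  set φ : ℝ → ℝ := fun s => RCLike.re ⟪u s, u s⟫ with hφdef
  set α : ℝ → ℝ := fun s => RCLike.re ⟪B (u s), u s⟫ with hαdef
  have hψφ : ψ = fun s => Real.sqrt (φ s) := by
    funext s; rw [hψu s]; exact norm_eq_sqrt_re_inner (𝕜 := ℂ) (u s)
  have hφpos : ∀ t, 0 < φ t := fun t => by
    have : φ t = ‖u t‖ ^ 2 := inner_self_eq_norm_sq (𝕜 := ℂ) (u t)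
    rw [this]; exact pow_pos (norm_pos_iff.mpr (hune t)) 2
  have hφ' : ∀ t, HasDerivAt φ (-(2 * α t)) t := by
    intro t
    have h1 := (hu' t).inner ℂ (hu' t)
    have h2 := (RCLike.reCLM (K := ℂ)).hasFDerivAt.comp_hasDerivAt t h1
    have e : RCLike.re (⟪u t, -(B (u t))⟫ + ⟪-(B (u t)), u t⟫) = -(2 * α t) := by
      simp only [inner_neg_left, inner_neg_right, map_add, map_neg, hαdef]
      rw [inner_re_symm]; ring
    simp only [RCLike.reCLM_apply, e] at h2; exact h2
  have hα' : ∀ t, HasDerivAt α (-(2 * ‖B (u t)‖ ^ 2)) t := by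
    intro t
    have hBu : HasDerivAt (fun s => B (u s)) (B (-(B (u t)))) t :=
      ((B.restrictScalars ℝ).hasFDerivAt (x := u t)).comp_hasDerivAt t (hu' t)
    have h1 := hBu.inner ℂ (hu' t)
    have h2 := (RCLike.reCLM (K := ℂ)).hasFDerivAt.comp_hasDerivAt t h1
    have e : RCLike.re (⟪B (u t), -(B (u t))⟫ + ⟪B (-(B (u t))), u t⟫)
        = -(2 * ‖B (u t)‖ ^ 2) := by
      rw [map_neg B, inner_neg_left, inner_neg_right, map_add, map_neg, map_neg,
        hsymm (B (u t)) (u t)]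
      have : RCLike.re ⟪B (u t), B (u t)⟫ = ‖B (u t)‖ ^ 2 :=
        inner_self_eq_norm_sq (𝕜 := ℂ) _
      rw [this]; ring
    simp only [RCLike.reCLM_apply, e] at h2; exact h2
  have hψ' : ∀ t, HasDerivAt ψ (-(α t) / ψ t) t := by
    intro t
    have h1 := (hφ' t).sqrt (ne_of_gt (hφpos t))
    have e : -(2 * α t) / (2 * Real.sqrt (φ t)) = -(α t) / ψ t := by
      rw [neg_div, neg_div, mul_div_mul_left _ _ (two_ne_zero),
        show Real.sqrt (φ t) = ψ t from (congrFun hψφ t).symm]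
    rw [e] at h1
    simpa only [← hψφ] using h1
  have hderivψ : deriv ψ = fun t => -(α t) / ψ t := funext fun t => (hψ' t).deriv
  have key : ∀ t : ℝ, ‖B (u t)‖ ^ 2 ≤ ψ t * deriv (deriv ψ) t ∧ 0 < ‖B (u t)‖ ^ 2 := by
    intro t
    have hp : ψ t ≠ 0 := ne_of_gt (hψpos t)
    have hdd : HasDerivAt (fun s => -(α s) / ψ s)
        ((-(-(2 * ‖B (u t)‖ ^ 2)) * ψ t - -(α t) * (-(α t) / ψ t)) / ψ t ^ 2) t :=
      (hα' t).neg.div (hψ' t) hp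
    have hDD : deriv (deriv ψ) t
        = (-(-(2 * ‖B (u t)‖ ^ 2)) * ψ t - -(α t) * (-(α t) / ψ t)) / ψ t ^ 2 := by
      rw [hderivψ]; exact hdd.deriv
    have hCS : |α t| ≤ ‖B (u t)‖ * ψ t := by
      calc |α t| ≤ ‖⟪B (u t), u t⟫‖ := RCLike.abs_re_le_norm _
        _ ≤ ‖B (u t)‖ * ‖u t‖ := norm_inner_le_norm _ _
        _ = ‖B (u t)‖ * ψ t := by rw [hψu t]
    have hA2 : α t ^ 2 ≤ ‖B (u t)‖ ^ 2 * ψ t ^ 2 := by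
      nlinarith [abs_nonneg (α t), sq_abs (α t), norm_nonneg (B (u t)), hψpos t]
    constructor
    · rw [hDD]
      have hp2 : (0:ℝ) < ψ t ^ 2 := pow_pos (hψpos t) 2
      have e2 : ψ t * ((-(-(2 * ‖B (u t)‖ ^ 2)) * ψ t - -(α t) * (-(α t) / ψ t)) / ψ t ^ 2)
          = (2 * ‖B (u t)‖ ^ 2 * ψ t ^ 2 - α t ^ 2) / ψ t ^ 2 := by
        field_simp
      rw [e2, le_div_iff₀ hp2]
      nlinarith [hA2]
    · exact pow_pos (norm_pos_iff.mpr (hBune t)) 2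
  refine ⟨fun t _ => key t, ?_⟩
  refine strictConvexOn_of_deriv2_pos (convex_Ici 0) ?_ ?_
  · exact (continuous_iff_continuousAt.mpr fun t => (hψ' t).continuousAt).continuousOn
  · intro x hx
    have h2 : deriv^[2] ψ = deriv (deriv ψ) := rfl
    rw [h2]
    have := key x
    nlinarith [hψpos x, this.1, this.2]
end
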